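/- Let X be a random variable on a discrete probability space with finite range 𝒳 and let ρ be a random state on a finite-dimensional complex Hilbert space, defined on the same probability space. Then D(X | ρ) = tr( Σ_{x∈𝒳} P_X(x)² ρ_x² ) − (1/|𝒳|) tr([ρ]²), where ρ_x := [ρ | X = x] for each x ∈ 𝒳 and P_X is the distribution of X. -/

import Mathlib

open Matrix
open scoped Kronecker ComplexOrder

noncomputable section

/-- A density operator: positive semidefinite with trace one. -/
def IsDensityOp {d : Type*} [Fintype d] [DecidableEq d] (ρ : Matrix d d ℂ) : Prop :=
  ρ.PosSemidef ∧ ρ.trace = 1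

/-- The operator absolute value `|A| = (A Aᴴ)^(1/2)`. -/
noncomputable def matAbs {d : Type*} [Fintype d] [DecidableEq d] (A : Matrix d d ℂ) :
    Matrix d d ℂ :=
  (Matrix.posSemidef_self_mul_conjTranspose A).1.eigenvectorUnitary.1 *
    Matrix.diagonal ((↑) ∘ (√·) ∘ (Matrix.posSemidef_self_mul_conjTranspose A).1.eigenvalues) *
    (star (Matrix.posSemidef_self_mul_conjTranspose A).1.eigenvectorUnitary : Matrix d d ℂ)

/-- Trace distance `δ(ρ,σ) = (1/2) tr|ρ-σ|`. -/
noncomputable def traceDist {d : Type*} [Fintype d] [DecidableEq d]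
    (ρ σ : Matrix d d ℂ) : ℝ :=
  (1 / 2) * (matAbs (ρ - σ)).trace.re

/-- Squared Hilbert-Schmidt distance `Δ(ρ,σ) = tr((ρ-σ)²)`. -/
noncomputable def hsDistSq {d : Type*} [Fintype d] [DecidableEq d]
    (ρ σ : Matrix d d ℂ) : ℝ :=
  ((ρ - σ) * (ρ - σ)).trace.re

/-- Expectation of a random state. -/
noncomputable def expState {Ω d : Type*} [Fintype d]
    (P : Ω → ℝ) (ρ : Ω → Matrix d d ℂ) : Matrix d d ℂ :=
  ∑' ω, P ω • ρ ω

/-- Probability of an event. -/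
noncomputable def prEvent {Ω : Type*} (P : Ω → ℝ) (E : Set Ω) : ℝ :=
  ∑' ω, E.indicator P ω

/-- Conditional expectation `[ρ | E]` of a random state given an event. -/
noncomputable def condExpState {Ω d : Type*} [Fintype d]
    (P : Ω → ℝ) (ρ : Ω → Matrix d d ℂ) (E : Set Ω) : Matrix d d ℂ :=
  (prEvent P E)⁻¹ • ∑' ω, E.indicator (fun ω => P ω • ρ ω) ω

/-- The classical state `|x⟩⟨x|`. -/
noncomputable def classicalState {𝒳 : Type*} [Fintype 𝒳] [DecidableEq 𝒳] (x : 𝒳) :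
    Matrix 𝒳 𝒳 ℂ :=
  Matrix.single x x 1

/-- The fully mixed state on `𝒳`. -/
noncomputable def uniformState (𝒳 : Type*) [Fintype 𝒳] [DecidableEq 𝒳] : Matrix 𝒳 𝒳 ℂ :=
  (Fintype.card 𝒳 : ℂ)⁻¹ • (1 : Matrix 𝒳 𝒳 ℂ)

/-- Non-uniformity `d(X|ρ) = δ([{X} ⊗ ρ], [{U}] ⊗ [ρ])`. -/
noncomputable def nonUnif {Ω 𝒳 d : Type*} [Fintype 𝒳] [DecidableEq 𝒳]
    [Fintype d] [DecidableEq d]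
    (P : Ω → ℝ) (X : Ω → 𝒳) (ρ : Ω → Matrix d d ℂ) : ℝ :=
  traceDist (expState P (fun ω => classicalState (X ω) ⊗ₖ ρ ω))
    (uniformState 𝒳 ⊗ₖ expState P ρ)

/-- `D(X|ρ) = Δ([{X} ⊗ ρ], [{U}] ⊗ [ρ])`. -/
noncomputable def DNonUnif {Ω 𝒳 d : Type*} [Fintype 𝒳] [DecidableEq 𝒳]
    [Fintype d] [DecidableEq d]
    (P : Ω → ℝ) (X : Ω → 𝒳) (ρ : Ω → Matrix d d ℂ) : ℝ :=
  hsDistSq (expState P (fun ω => classicalState (X ω) ⊗ₖ ρ ω))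
    (uniformState 𝒳 ⊗ₖ expState P ρ)

/-- Rényi entropy of order 0: `log₂ rank ρ`. -/
noncomputable def renyiS0 {d : Type*} [Fintype d] [DecidableEq d] (ρ : Matrix d d ℂ) : ℝ :=
  Real.logb 2 (ρ.rank)

/-- Rényi entropy of order 2: `-log₂ tr(ρ²)`. -/
noncomputable def renyiS2 {d : Type*} [Fintype d] [DecidableEq d] (ρ : Matrix d d ℂ) : ℝ :=
  -Real.logb 2 ((ρ * ρ).trace.re)

/-- Maximal eigenvalue of a Hermitian matrix. -/
noncomputable def lambdaMax {d : Type*} [Fintype d] [DecidableEq d] (ρ : Matrix d d ℂ) : ℝ :=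
  if h : ρ.IsHermitian then ⨆ i, h.eigenvalues i else 0

/-- Von Neumann entropy `S(ρ) = -tr(ρ log₂ ρ)` (in bits). -/
noncomputable def vnEntropy {d : Type*} [Fintype d] [DecidableEq d] (ρ : Matrix d d ℂ) : ℝ :=
  if h : ρ.IsHermitian then -∑ i, h.eigenvalues i * Real.logb 2 (h.eigenvalues i) else 0

/-- Smooth Rényi entropy of order 0. -/
noncomputable def smoothS0 {d : Type*} [Fintype d] [DecidableEq d]
    (ε : ℝ) (ρ : Matrix d d ℂ) : ℝ :=
  sInf {x : ℝ | ∃ σ : Matrix d d ℂ,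
    IsDensityOp σ ∧ traceDist ρ σ ≤ ε ∧ x = Real.logb 2 (σ.rank)}

/-- Smooth Rényi entropy of order ∞. -/
noncomputable def smoothSinf {d : Type*} [Fintype d] [DecidableEq d]
    (ε : ℝ) (ρ : Matrix d d ℂ) : ℝ :=
  sSup {x : ℝ | ∃ σ : Matrix d d ℂ,
    IsDensityOp σ ∧ traceDist ρ σ ≤ ε ∧ x = -Real.logb 2 (lambdaMax σ)}



lemma aux_tsum_apply {ι m n R : Type*} [AddCommMonoid R] [TopologicalSpace R] [T2Space R]
    {f : ι → Matrix m n R} (hf : Summable f) (i : m) (j : n) :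
    (∑' x, f x) i j = ∑' x, f x i j := by
  have h1 : Summable (fun x => f x i) := (Pi.summable.mp hf) i
  exact (congrFun (tsum_apply (x := i) hf) j).trans (tsum_apply h1)

lemma aux_summable {Ω m n : Type*} [Fintype m] [Fintype n] {P : Ω → ℝ}
    (hP : ∀ ω, 0 ≤ P ω) (hPsum : Summable P) {ρ : Ω → Matrix m n ℂ}
    (hρ : ∀ ω i j, ‖ρ ω i j‖ ≤ 1) : Summable (fun ω => P ω • ρ ω) := by
  refine Pi.summable.mpr fun i => Pi.summable.mpr fun j => ?_
  apply Summable.of_norm_bounded (g := P) hPsum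
  intro ω
  have : ‖(P ω • ρ ω) i j‖ = |P ω| * ‖ρ ω i j‖ := by
    simp [Matrix.smul_apply, norm_smul]
  rw [this, abs_of_nonneg (hP ω)]
  exact mul_le_of_le_one_right (hP ω) (hρ ω i j)

lemma density_diag_re_le {d : Type*} [Fintype d] [DecidableEq d] {M : Matrix d d ℂ}
    (h : IsDensityOp M) (i : d) : (M i i).re ≤ 1 := by
  obtain ⟨hpsd, htr⟩ := h
  have hdiag : ∀ k, 0 ≤ (M k k).re := by
    intro k
    have := hpsd.re_dotProduct_nonneg (Pi.single k 1)
    simpa [dotProduct, Pi.single_apply, Matrix.mulVec, Finset.sum_ite_eq] using this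
  have h1 : ∑ k, (M k k).re = 1 := by
    have : (M.trace).re = ∑ k, (M k k).re := by
      simp [Matrix.trace, Matrix.diag, Complex.re_sum]
    rw [← this, htr]; simp
  calc (M i i).re ≤ ∑ k, (M k k).re :=
        Finset.single_le_sum (fun k _ => hdiag k) (Finset.mem_univ i)
    _ = 1 := h1

lemma density_entry_bound {d : Type*} [Fintype d] [DecidableEq d] {M : Matrix d d ℂ}
    (h : IsDensityOp M) (i j : d) : ‖M i j‖ ≤ 1 := by
  have hpsd := h.1
  obtain ⟨S, hS2, hSH⟩ : ∃ S : Matrix d d ℂ, S * S = M ∧ S.IsHermitian := by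
    open scoped MatrixOrder in
    exact ⟨CFC.sqrt M, CFC.sqrt_mul_sqrt_self M hpsd.nonneg, (CFC.sqrt_nonneg M).posSemidef.isHermitian⟩
  set u : d → EuclideanSpace ℂ d := fun a => (WithLp.equiv 2 (d → ℂ)).symm (fun k => S k a)
    with hu
  have huapp : ∀ a k, u a k = S k a := by intro a k; simp [hu]
  have hik : ∀ (a b : d), (inner ℂ (u a) (u b) : ℂ) = M a b := by
    intro a b
    rw [← hS2]
    simp only [PiLp.inner_apply, Matrix.mul_apply, RCLike.inner_apply, huapp]
    apply Finset.sum_congr rfl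
    intro k _
    rw [show (starRingEnd ℂ) (S k a) = S a k from hSH.apply a k, mul_comm]
  have hnorm : ∀ a : d, ‖u a‖ ≤ 1 := by
    intro a
    have h2 : ‖u a‖ ^ 2 = (M a a).re := by
      rw [← inner_self_eq_norm_sq (𝕜 := ℂ), hik a a]; rfl
    nlinarith [norm_nonneg (u a), density_diag_re_le h a, h2]
  calc ‖M i j‖ = ‖(inner ℂ (u i) (u j) : ℂ)‖ := by rw [hik]
    _ ≤ ‖u i‖ * ‖u j‖ := norm_inner_le_norm _ _
    _ ≤ 1 * 1 := mul_le_mul (hnorm i) (hnorm j) (norm_nonneg _) zero_le_one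
    _ = 1 := by ring

/-- **Lemma 7.** `D(X|ρ) = tr((Σ_x P_X(x)² ρ_x²) - (1/|𝒳|)[ρ]²)`. -/
theorem stmt_8 {Ω 𝒳 d : Type*} [Countable Ω] [Fintype 𝒳] [DecidableEq 𝒳]
    [Fintype d] [DecidableEq d]
    (P : Ω → ℝ) (hP : ∀ ω, 0 ≤ P ω) (hP1 : ∑' ω, P ω = 1)
    (X : Ω → 𝒳) (ρ : Ω → Matrix d d ℂ) (hρ : ∀ ω, IsDensityOp (ρ ω)) :
    DNonUnif P X ρ
      = (∑ x : 𝒳, (prEvent P {ω | X ω = x}) ^ 2 •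
            (condExpState P ρ {ω | X ω = x} * condExpState P ρ {ω | X ω = x})).trace.re
        - (1 / (Fintype.card 𝒳 : ℝ)) *
            (expState P ρ * expState P ρ).trace.re := by
  classical
  rcases isEmpty_or_nonempty 𝒳 with hE | hNE
  · haveI : IsEmpty Ω := ⟨fun ω => hE.false (X ω)⟩
    rw [tsum_empty] at hP1
    exact absurd hP1 zero_ne_one
  have hPsum : Summable P := by
    by_contra hc
    rw [tsum_eq_zero_of_not_summable hc] at hP1
    exact zero_ne_one hP1
  have hent : ∀ ω (i j : d), ‖ρ ω i j‖ ≤ 1 := fun ω => density_entry_bound (hρ ω)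
  have hg : Summable (fun ω => P ω • ρ ω) := aux_summable hP hPsum hent
  set F : Ω → Matrix (𝒳 × d) (𝒳 × d) ℂ := fun ω => classicalState (X ω) ⊗ₖ ρ ω with hF
  have hFent : ∀ ω (p q : 𝒳 × d), ‖F ω p q‖ ≤ 1 := by
    rintro ω ⟨x, i⟩ ⟨y, j⟩
    have hfe : F ω (x, i) (y, j) = (if X ω = x ∧ X ω = y then 1 else 0 : ℂ) * ρ ω i j := by
      simp [hF, Matrix.kroneckerMap_apply, classicalState, Matrix.single]
    rw [hfe]
    split_ifs with h
    · simpa using hent ω i j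
    · simp
  have hgF : Summable (fun ω => P ω • F ω) := aux_summable hP hPsum hFent
  set A : 𝒳 → Matrix d d ℂ :=
    fun x => ∑' ω, ({ω | X ω = x}).indicator (fun ω => P ω • ρ ω) ω with hA
  have hgind : ∀ x : 𝒳, Summable (({ω | X ω = x}).indicator (fun ω => P ω • ρ ω)) :=
    fun x => hg.indicator _
  set R : Matrix d d ℂ := expState P ρ with hR
  set σ : Matrix (𝒳 × d) (𝒳 × d) ℂ := expState P F with hσdef
  have hσ : ∀ x i y j, σ (x, i) (y, j) = if x = y then A x i j else 0 := by
    intro x i y j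
    rw [hσdef, expState, aux_tsum_apply hgF]
    by_cases hxy : x = y
    · subst hxy
      rw [if_pos rfl]
      simp only [hA]
      rw [aux_tsum_apply (hgind x)]
      apply tsum_congr; intro ω
      by_cases hx : X ω = x
      · rw [Set.indicator_of_mem (show ω ∈ {ω | X ω = x} from hx)]
        simp [hF, Matrix.kroneckerMap_apply, classicalState, Matrix.single, hx,
          Matrix.smul_apply]
      · rw [Set.indicator_of_notMem (show ω ∉ {ω | X ω = x} from hx)]
        simp [hF, Matrix.kroneckerMap_apply, classicalState, Matrix.single, hx,
          Matrix.smul_apply]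
    · rw [if_neg hxy]
      have hz : ∀ ω, (P ω • F ω) (x, i) (y, j) = 0 := by
        intro ω
        by_cases hx : X ω = x
        · have hy : X ω ≠ y := fun h => hxy (hx ▸ h)
          simp only [hF, Matrix.kroneckerMap_apply, classicalState, Matrix.single,
            Matrix.smul_apply, Matrix.of_apply]
          simp [hx, hy]
          exact fun h => absurd h hxy
        · simp [hF, Matrix.kroneckerMap_apply, classicalState, Matrix.single,
            Matrix.smul_apply, hx]
      rw [tsum_congr hz, tsum_zero]
  have hτ : ∀ x i y j, (uniformState 𝒳 ⊗ₖ R) (x, i) (y, j)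
      = if x = y then ((Fintype.card 𝒳 : ℂ))⁻¹ * R i j else 0 := by
    intro x i y j
    by_cases hxy : x = y <;>
      simp [uniformState, Matrix.kroneckerMap_apply, Matrix.one_apply, hxy, Matrix.smul_apply]
  have hsumA : ∑ x : 𝒳, A x = R := by
    rw [hR, expState]
    simp only [hA]
    rw [← Summable.tsum_finsetSum (fun x _ => hgind x)]
    apply tsum_congr; intro ω
    simp [Set.indicator_apply, Finset.sum_ite_eq]
  set c : ℂ := ((Fintype.card 𝒳 : ℂ))⁻¹ with hc
  set C : 𝒳 → Matrix d d ℂ := fun x => A x - c • R with hC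
  have hMentry : ∀ x i y j, (σ - uniformState 𝒳 ⊗ₖ R) (x, i) (y, j)
      = if x = y then C x i j else 0 := by
    intro x i y j
    rw [Matrix.sub_apply, hσ, hτ]
    by_cases hxy : x = y <;>
      simp [hxy, hC, Matrix.sub_apply, Matrix.smul_apply, smul_eq_mul]
  have htrace : ((σ - uniformState 𝒳 ⊗ₖ R) * (σ - uniformState 𝒳 ⊗ₖ R)).trace
      = ∑ x, (C x * C x).trace := by
    rw [Matrix.trace]
    simp only [Matrix.diag_apply, Matrix.mul_apply]
    rw [Fintype.sum_prod_type]
    apply Finset.sum_congr rfl; intro x _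
    rw [Finset.sum_comm]
    simp only [Fintype.sum_prod_type, hMentry]
    simp only [ite_mul, zero_mul, mul_ite, mul_zero]
    rw [Matrix.trace]
    simp only [Matrix.diag_apply, Matrix.mul_apply]
    rw [Finset.sum_comm]
    apply Finset.sum_congr rfl; intro y _
    rw [Finset.sum_eq_single x]
    · simp only [if_pos rfl]
      exact Finset.sum_congr rfl fun k _ => mul_comm _ _
    · intro b _ hb; simp [hb]
    · intro h; exact absurd (Finset.mem_univ x) h
  have hcard : (Fintype.card 𝒳 : ℂ) * c = 1 := by
    rw [hc]
    have : (Fintype.card 𝒳 : ℂ) ≠ 0 := by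
      simp [Fintype.card_ne_zero]
    field_simp
  have hexpand : ∑ x, (C x * C x).trace
      = (∑ x, (A x * A x).trace) - c * (R * R).trace := by
    have h1 : ∀ x, (C x * C x).trace
        = (A x * A x).trace - c * (A x * R).trace - c * (R * A x).trace
          + (c * c) * (R * R).trace := by
      intro x
      rw [hC]
      simp only [sub_mul, mul_sub, Matrix.smul_mul, Matrix.mul_smul, Matrix.trace_sub,
        Matrix.trace_smul, smul_smul, smul_eq_mul]
      ring
    rw [Finset.sum_congr rfl (fun x _ => h1 x)]
    have hTA : ∑ x : 𝒳, (A x * R).trace = (R * R).trace := by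
      rw [← Matrix.trace_sum, ← Finset.sum_mul, hsumA]
    have hTB : ∑ x : 𝒳, (R * A x).trace = (R * R).trace := by
      rw [← Matrix.trace_sum, ← Finset.mul_sum, hsumA]
    rw [Finset.sum_add_distrib, Finset.sum_sub_distrib, Finset.sum_sub_distrib,
      ← Finset.mul_sum, ← Finset.mul_sum, hTA, hTB, Finset.sum_const, Finset.card_univ,
      nsmul_eq_mul]
    have : (Fintype.card 𝒳 : ℂ) * (c * c * (R * R).trace) = c * (R * R).trace := by
      rw [← mul_assoc, ← mul_assoc, hcard, one_mul]
    rw [this]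
    ring
  have hRHS1 : ∀ x : 𝒳, (prEvent P {ω | X ω = x}) ^ 2 •
      (condExpState P ρ {ω | X ω = x} * condExpState P ρ {ω | X ω = x}) = A x * A x := by
    intro x
    have hcond : condExpState P ρ {ω | X ω = x} = (prEvent P {ω | X ω = x})⁻¹ • A x := rfl
    set p := prEvent P {ω | X ω = x} with hp
    by_cases hp0 : p = 0
    · have hA0 : A x = 0 := by
        have hPz : ∀ ω, X ω = x → P ω = 0 := by
          intro ω hω
          have hind : Summable ({ω | X ω = x}.indicator P) := hPsum.indicator _
          have hle := Summable.le_tsum hind ω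
            (fun k _ => Set.indicator_nonneg (fun ω' _ => hP ω') k)
          rw [show (∑' k, {ω | X ω = x}.indicator P k) = p from rfl, hp0] at hle
          rw [Set.indicator_of_mem (show ω ∈ {ω | X ω = x} from hω)] at hle
          exact le_antisymm hle (hP ω)
        have hz : ∀ ω, ({ω | X ω = x}).indicator (fun ω => P ω • ρ ω) ω = 0 := by
          intro ω
          by_cases hω : X ω = x
          · rw [Set.indicator_of_mem (show ω ∈ {ω | X ω = x} from hω), hPz ω hω]; simp
          · exact Set.indicator_of_notMem (show ω ∉ {ω | X ω = x} from hω) _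
        simp only [hA]
        rw [tsum_congr hz, tsum_zero]
      rw [hcond, hp0, hA0]
      simp
    · rw [hcond, smul_mul_smul_comm, smul_smul]
      have : p ^ 2 * (p⁻¹ * p⁻¹) = 1 := by rw [sq]; field_simp
      rw [this, one_smul]
  rw [DNonUnif, hsDistSq]
  rw [htrace, hexpand]
  rw [Finset.sum_congr rfl (fun x _ => hRHS1 x), Matrix.trace_sum, ← Matrix.trace_sum]
  have hcre : c = ((1 / (Fintype.card 𝒳 : ℝ) : ℝ) : ℂ) := by
    rw [hc]; push_cast; ring
  rw [hcre, Complex.sub_re, Complex.re_ofReal_mul, Matrix.trace_sum, Complex.re_sum]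

end
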